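/- Let $D \in \mathbb{N}$ and let $p$ be a probability measure on $\mathbb{R}^D$ (with the Borel $\sigma$-algebra). For $z \in \mathbb{R}^D$, $\alpha \in (0,1)$, and $j \in \{1, \dots, D\}$, define $N(z, \alpha) := \int \exp\left(-\frac{\|z - \sqrt{\alpha}\, x\|_2^2}{2(1-\alpha)}\right) dp(x)$ and $M_j(z, \alpha) := \int \frac{z_j - \sqrt{\alpha}\, x_j}{\sqrt{1-\alpha}} \exp\left(-\frac{\|z - \sqrt{\alpha}\, x\|_2^2}{2(1-\alpha)}\right) dp(x)$. Then for each $j$, the function $(z, \alpha) \mapsto M_j(z, \alpha)/N(z, \alpha)$ is continuous on $\mathbb{R}^D \times (0,1)$. -/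

import Mathlib

open MeasureTheory

lemma aux_texp (t : ℝ) (ht : 0 ≤ t) : t * Real.exp (-(t ^ 2 / 2)) ≤ 1 := by
  have h := Real.add_one_le_exp (t ^ 2 / 2)
  have h2 : t ≤ Real.exp (t ^ 2 / 2) := by nlinarith
  have h3 : Real.exp (-(t ^ 2 / 2)) = (Real.exp (t ^ 2 / 2))⁻¹ := by
    rw [Real.exp_neg]
  rw [h3]
  rw [mul_inv_le_iff₀ (Real.exp_pos _), one_mul]
  exact h2

/-- Continuity of the true noise function: the ratio `M_j(z, α) / N(z, α)` of the
posterior-mean noise formula of Proposition 3 is continuous on `ℝ^D × (0,1)`. -/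
theorem posterior_noise_continuous
    (D : ℕ) (p : Measure (Fin D → ℝ)) [IsProbabilityMeasure p] (j : Fin D) :
    ContinuousOn
      (fun q : (Fin D → ℝ) × ℝ =>
        (∫ x, (q.1 j - Real.sqrt q.2 * x j) / Real.sqrt (1 - q.2) *
            Real.exp (-(∑ k, (q.1 k - Real.sqrt q.2 * x k) ^ 2) / (2 * (1 - q.2))) ∂p) /
        (∫ x,
            Real.exp (-(∑ k, (q.1 k - Real.sqrt q.2 * x k) ^ 2) / (2 * (1 - q.2))) ∂p))
      (Set.univ ×ˢ Set.Ioo (0 : ℝ) 1) := by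
  -- notation
  set F : ((Fin D → ℝ) × ℝ) → (Fin D → ℝ) → ℝ := fun q x =>
      (q.1 j - Real.sqrt q.2 * x j) / Real.sqrt (1 - q.2) *
        Real.exp (-(∑ k, (q.1 k - Real.sqrt q.2 * x k) ^ 2) / (2 * (1 - q.2))) with hF
  set G : ((Fin D → ℝ) × ℝ) → (Fin D → ℝ) → ℝ := fun q x =>
      Real.exp (-(∑ k, (q.1 k - Real.sqrt q.2 * x k) ^ 2) / (2 * (1 - q.2))) with hG
  have hSopen : IsOpen {q : (Fin D → ℝ) × ℝ | q.2 ∈ Set.Ioo (0:ℝ) 1} :=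
    isOpen_Ioo.preimage continuous_snd
  -- continuity in x for fixed q
  have hcontx : ∀ q : (Fin D → ℝ) × ℝ, Continuous (F q) := by
    intro q
    apply Continuous.mul
    · exact ((continuous_const.sub (continuous_const.mul (continuous_apply j))).div_const _)
    · apply Real.continuous_exp.comp
      apply Continuous.div_const
      apply Continuous.neg
      exact continuous_finset_sum _ fun k _ =>
        ((continuous_const.sub (continuous_const.mul (continuous_apply k))).pow 2)
  have hcontxG : ∀ q : (Fin D → ℝ) × ℝ, Continuous (G q) := by
    intro q
    apply Real.continuous_exp.comp
    apply Continuous.div_const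
    apply Continuous.neg
    exact continuous_finset_sum _ fun k _ =>
      ((continuous_const.sub (continuous_const.mul (continuous_apply k))).pow 2)
  -- bounds
  have hboundF : ∀ q : (Fin D → ℝ) × ℝ, q.2 ∈ Set.Ioo (0:ℝ) 1 → ∀ x, ‖F q x‖ ≤ 1 := by
    intro q hq x
    have h1 : (0:ℝ) < 1 - q.2 := by linarith [hq.2]
    have hc : (0:ℝ) < Real.sqrt (1 - q.2) := Real.sqrt_pos.mpr h1
    have hc2 : Real.sqrt (1 - q.2) ^ 2 = 1 - q.2 := Real.sq_sqrt h1.le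
    set u : Fin D → ℝ := fun k => q.1 k - Real.sqrt q.2 * x k with hu
    have hsum : u j ^ 2 ≤ ∑ k, u k ^ 2 :=
      Finset.single_le_sum (fun k _ => sq_nonneg (u k)) (Finset.mem_univ j)
    have hexp : Real.exp (-(∑ k, u k ^ 2) / (2 * (1 - q.2)))
        ≤ Real.exp (-(u j ^ 2) / (2 * (1 - q.2))) := by
      apply Real.exp_le_exp.mpr
      apply div_le_div_of_nonneg_right (by linarith) (by linarith)
    set t : ℝ := |u j| / Real.sqrt (1 - q.2) with hT
    have ht : 0 ≤ t := div_nonneg (abs_nonneg _) hc.le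
    have ht2 : -(u j ^ 2) / (2 * (1 - q.2)) = -(t ^ 2 / 2) := by
      rw [hT, div_pow, sq_abs, hc2, div_div]
      ring
    have key : t * Real.exp (-(t ^ 2 / 2)) ≤ 1 := aux_texp t ht
    have : ‖F q x‖ = |u j| / Real.sqrt (1 - q.2) *
        Real.exp (-(∑ k, u k ^ 2) / (2 * (1 - q.2))) := by
      rw [hF]
      simp only [norm_mul, Real.norm_eq_abs, abs_div, Real.abs_exp,
        abs_of_pos hc]
      rfl
    rw [this]
    calc |u j| / Real.sqrt (1 - q.2) * Real.exp (-(∑ k, u k ^ 2) / (2 * (1 - q.2)))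
        ≤ t * Real.exp (-(u j ^ 2) / (2 * (1 - q.2))) := by
          exact mul_le_mul_of_nonneg_left hexp ht
      _ = t * Real.exp (-(t ^ 2 / 2)) := by rw [ht2]
      _ ≤ 1 := key
  have hboundG : ∀ q : (Fin D → ℝ) × ℝ, q.2 ∈ Set.Ioo (0:ℝ) 1 → ∀ x, ‖G q x‖ ≤ 1 := by
    intro q hq x
    have h1 : (0:ℝ) < 1 - q.2 := by linarith [hq.2]
    rw [hG]
    simp only [Real.norm_eq_abs, Real.abs_exp]
    apply Real.exp_le_one_iff.mpr
    apply div_nonpos_of_nonpos_of_nonneg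
    · simp only [neg_nonpos]
      exact Finset.sum_nonneg fun k _ => sq_nonneg _
    · linarith
  -- main continuity
  intro q₀ hq₀
  have hq₂ : q₀.2 ∈ Set.Ioo (0:ℝ) 1 := hq₀.2
  have h1 : (0:ℝ) < 1 - q₀.2 := by linarith [hq₂.2]
  have hnhds : {q : (Fin D → ℝ) × ℝ | q.2 ∈ Set.Ioo (0:ℝ) 1} ∈ nhds q₀ :=
    hSopen.mem_nhds hq₂
  -- continuity in q of integrands
  have hcontq : ∀ x, ContinuousAt (fun q => F q x) q₀ := by
    intro x
    have hs : ContinuousAt (fun q : (Fin D → ℝ) × ℝ =>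
        ∑ k, (q.1 k - Real.sqrt q.2 * x k) ^ 2) q₀ := by
      exact (continuous_finset_sum _ fun k _ =>
        ((((continuous_apply k).comp continuous_fst).sub
          ((Real.continuous_sqrt.comp continuous_snd).mul
            continuous_const)).pow 2)).continuousAt
    have hden : ContinuousAt (fun q : (Fin D → ℝ) × ℝ => Real.sqrt (1 - q.2)) q₀ :=
      (Real.continuous_sqrt.comp (continuous_const.sub continuous_snd)).continuousAt
    have hden' : Real.sqrt (1 - q₀.2) ≠ 0 := (Real.sqrt_pos.mpr h1).ne'
    have hden2 : ContinuousAt (fun q : (Fin D → ℝ) × ℝ => 2 * (1 - q.2)) q₀ :=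
      (continuous_const.mul (continuous_const.sub continuous_snd)).continuousAt
    have hden2' : (2 : ℝ) * (1 - q₀.2) ≠ 0 := by positivity
    have hnum : ContinuousAt (fun q : (Fin D → ℝ) × ℝ =>
        q.1 j - Real.sqrt q.2 * x j) q₀ :=
      ((continuous_apply j).comp continuous_fst).continuousAt.sub
        ((Real.continuous_sqrt.comp continuous_snd).continuousAt.mul continuousAt_const)
    exact (hnum.div hden hden').mul
      (Real.continuous_exp.continuousAt.comp ((hs.neg.div hden2 hden2')))
  have hcontqG : ∀ x, ContinuousAt (fun q => G q x) q₀ := by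
    intro x
    have hs : ContinuousAt (fun q : (Fin D → ℝ) × ℝ =>
        ∑ k, (q.1 k - Real.sqrt q.2 * x k) ^ 2) q₀ := by
      exact (continuous_finset_sum _ fun k _ =>
        ((((continuous_apply k).comp continuous_fst).sub
          ((Real.continuous_sqrt.comp continuous_snd).mul
            continuous_const)).pow 2)).continuousAt
    have hden2 : ContinuousAt (fun q : (Fin D → ℝ) × ℝ => 2 * (1 - q.2)) q₀ :=
      (continuous_const.mul (continuous_const.sub continuous_snd)).continuousAt
    have hden2' : (2 : ℝ) * (1 - q₀.2) ≠ 0 := by positivity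
    exact Real.continuous_exp.continuousAt.comp ((hs.neg.div hden2 hden2'))
  have hM : ContinuousAt (fun q => ∫ x, F q x ∂p) q₀ := by
    apply continuousAt_of_dominated (bound := fun _ => (1:ℝ))
    · exact Filter.Eventually.of_forall fun q => (hcontx q).aestronglyMeasurable
    · filter_upwards [hnhds] with q hq
      exact Filter.Eventually.of_forall fun x => hboundF q hq x
    · exact integrable_const 1
    · exact Filter.Eventually.of_forall hcontq
  have hN : ContinuousAt (fun q => ∫ x, G q x ∂p) q₀ := by
    apply continuousAt_of_dominated (bound := fun _ => (1:ℝ))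
    · exact Filter.Eventually.of_forall fun q => (hcontxG q).aestronglyMeasurable
    · filter_upwards [hnhds] with q hq
      exact Filter.Eventually.of_forall fun x => hboundG q hq x
    · exact integrable_const 1
    · exact Filter.Eventually.of_forall hcontqG
  have hNpos : 0 < ∫ x, G q₀ x ∂p := by
    have hint : Integrable (G q₀) p :=
      (integrable_const (1:ℝ)).mono' (hcontxG q₀).aestronglyMeasurable
        (Filter.Eventually.of_forall fun x => hboundG q₀ hq₂ x)
    rw [integral_pos_iff_support_of_nonneg (fun x => (Real.exp_pos _).le) hint]
    have : Function.support (G q₀) = Set.univ := by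
      ext x; simp [hG, (Real.exp_pos _).ne']
    rw [this]
    simp
  exact (hM.div hN hNpos.ne').continuousWithinAt
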